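/- Let (A, θ) be a connected monounary algebra with nonempty set of cyclic elements, let c be a cyclic element, and let A_c = {c} ∪ {x not cyclic : ∃n ≥ 1, θ^n(x) = c, θ^{n−1}(x) not cyclic}, partially ordered by a ≥ b iff θ^k(a) = b for some k ≥ 0 (restricted to A_c). Then a bijection φ : A_c → A_c is an automorphism of the partial monounary algebra A_c if and only if it is an order automorphism of (A_c, ≤). -/
import Mathlib


/-- The set `A_c` of elements lying "above" `c`, avoiding the rest of the cyclic part. -/
def Az {A : Type*} (θ : A → A) (z : A) : Set A :=
  {z} ∪ {x | (¬ ∃ k ≥ 1, θ^[k] x = x) ∧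
    ∃ n : ℕ, θ^[n + 1] x = z ∧ ¬ ∃ k ≥ 1, θ^[k] (θ^[n] x) = θ^[n] x}

namespace Stmt19Aux

variable {A : Type*} {θ : A → A} {c : A}

/-- cyclic predicate -/
def Cyc (θ : A → A) (x : A) : Prop := ∃ k ≥ 1, θ^[k] x = x

lemma mem_Az {a : A} : a ∈ Az θ c ↔
    a = c ∨ (¬ Cyc θ a ∧ ∃ n : ℕ, θ^[n+1] a = c ∧ ¬ Cyc θ (θ^[n] a)) := Iff.rfl

lemma cyc_iter {x : A} (h : Cyc θ x) (j : ℕ) : Cyc θ (θ^[j] x) := by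
  obtain ⟨k, hk1, hk⟩ := h
  refine ⟨k, hk1, ?_⟩
  rw [← Function.iterate_add_apply, Nat.add_comm, Function.iterate_add_apply, hk]

lemma cyc_eq (hc : Cyc θ c) {a : A} (ha : a ∈ Az θ c) (h : Cyc θ a) : a = c := by
  rcases mem_Az.1 ha with h' | ⟨h', _⟩
  · exact h'
  · exact absurd h h'

lemma reach_c {a : A} (ha : a ∈ Az θ c) : ∃ k, θ^[k] a = c := by
  rcases mem_Az.1 ha with h' | ⟨_, n, hn, _⟩
  · exact ⟨0, h'⟩
  · exact ⟨n + 1, hn⟩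

lemma theta_mem (hc : Cyc θ c) {a : A} (ha : a ∈ Az θ c) (hne : a ≠ c) :
    θ a ∈ Az θ c := by
  rcases mem_Az.1 ha with h' | ⟨h1, n, hn, hn'⟩
  · exact absurd h' hne
  cases n with
  | zero => exact Or.inl hn
  | succ m =>
    refine Or.inr ⟨?_, m, ?_, ?_⟩
    · intro h
      apply hn'
      have := cyc_iter h m
      rwa [← Function.iterate_succ_apply] at this
    · rw [← Function.iterate_succ_apply]; exact hn
    · rw [← Function.iterate_succ_apply]; exact hn'

lemma antisym (hc : Cyc θ c) {a b : A} (ha : a ∈ Az θ c) (hb : b ∈ Az θ c)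
    {k j : ℕ} (hk : θ^[k] a = b) (hj : θ^[j] b = a) : a = b := by
  rcases Nat.eq_zero_or_pos (j + k) with h | h
  · obtain ⟨_, hk0⟩ := Nat.add_eq_zero.mp h
    rw [← hk, hk0, Function.iterate_zero_apply]
  · have hcyc : Cyc θ a := ⟨j + k, h, by
      rw [Function.iterate_add_apply, hk, hj]⟩
    have ha' : a = c := cyc_eq hc ha hcyc
    have hb' : b = c := cyc_eq hc hb (hk ▸ cyc_iter hcyc k)
    rw [ha', hb']

lemma chain_mem (hc : Cyc θ c) {a : A} (ha : a ∈ Az θ c) {n : ℕ}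
    (hn : θ^[n+1] a = c) (hn' : ¬ Cyc θ (θ^[n] a)) :
    ∀ i ≤ n + 1, θ^[i] a ∈ Az θ c := by
  intro i hi
  induction i with
  | zero => exact ha
  | succ m ih =>
    have h1 : θ^[m] a ∈ Az θ c := ih (by omega)
    have hne : θ^[m] a ≠ c := by
      intro h
      apply hn'
      have hnm : θ^[n] a = θ^[n - m] (θ^[m] a) := by
        rw [← Function.iterate_add_apply, Nat.sub_add_cancel (by omega)]
      rw [hnm, h]
      exact cyc_iter hc _
    rw [Function.iterate_succ_apply']
    exact theta_mem hc h1 hne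

lemma reach_shrink (hc : Cyc θ c) {a b : A} (ha : a ∈ Az θ c) (hb : b ∈ Az θ c)
    {k : ℕ} (hk : θ^[k] a = b) :
    ∃ k', θ^[k'] a = b ∧ ∀ i < k', θ^[i] a ∈ Az θ c ∧ θ^[i+1] a ∈ Az θ c := by
  rcases mem_Az.1 ha with h' | ⟨_, n, hn, hn'⟩
  · subst h'
    have hbc : b = a := cyc_eq hc hb (hk ▸ cyc_iter hc k)
    exact ⟨0, hbc.symm, fun i hi => absurd hi (Nat.not_lt_zero i)⟩
  · rcases le_or_gt k (n + 1) with hle | hlt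
    · exact ⟨k, hk, fun i hi =>
        ⟨chain_mem hc ha hn hn' i (by omega), chain_mem hc ha hn hn' (i+1) (by omega)⟩⟩
    · have hbc : b = c := by
        apply cyc_eq hc hb
        rw [← hk]
        have hkc : θ^[k] a = θ^[k - (n+1)] c := by
          rw [← hn, ← Function.iterate_add_apply, Nat.sub_add_cancel (by omega)]
        rw [hkc]
        exact cyc_iter hc _
      exact ⟨n + 1, by rw [hn, hbc], fun i hi =>
        ⟨chain_mem hc ha hn hn' i (by omega), chain_mem hc ha hn hn' (i+1) (by omega)⟩⟩

lemma commute_iter {φ : A → A}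
    (h2 : ∀ a ∈ Az θ c, θ a ∈ Az θ c → φ (θ a) = θ (φ a)) :
    ∀ (k : ℕ) (a : A), (∀ i < k, θ^[i] a ∈ Az θ c ∧ θ^[i+1] a ∈ Az θ c) →
      φ (θ^[k] a) = θ^[k] (φ a) := by
  intro k
  induction k with
  | zero => intro a _; rfl
  | succ m ih =>
    intro a h
    have h1 : θ^[m] a ∈ Az θ c := (h m (by omega)).1
    have h2' : θ^[m+1] a ∈ Az θ c := (h m (by omega)).2
    rw [Function.iterate_succ_apply', Function.iterate_succ_apply',
      h2 _ h1 (Function.iterate_succ_apply' θ m a ▸ h2'),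
      ih a (fun i hi => h i (by omega))]

lemma mono (hc : Cyc θ c) {φ : A → A}
    (h2 : ∀ a ∈ Az θ c, θ a ∈ Az θ c → φ (θ a) = θ (φ a))
    {a b : A} (ha : a ∈ Az θ c) (hb : b ∈ Az θ c)
    (h : ∃ k, θ^[k] a = b) : ∃ k, θ^[k] (φ a) = φ b := by
  obtain ⟨k, hk⟩ := h
  obtain ⟨k', hk', hchain⟩ := reach_shrink hc ha hb hk
  exact ⟨k', by rw [← commute_iter h2 k' a hchain, hk']⟩

end Stmt19Aux

open Stmt19Aux in
theorem stmt_19 {A : Type*} (θ : A → A)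
    (hconn : ∀ x y : A, ∃ n m : ℕ, θ^[n] x = θ^[m] y)
    (c : A) (hc : ∃ k ≥ 1, θ^[k] c = c)
    (φ : A → A) (hφ : Set.BijOn φ (Az θ c) (Az θ c)) :
    ((∀ a ∈ Az θ c, (θ a ∈ Az θ c ↔ θ (φ a) ∈ Az θ c)) ∧
        ∀ a ∈ Az θ c, θ a ∈ Az θ c → φ (θ a) = θ (φ a))
    ↔ ∀ a ∈ Az θ c, ∀ b ∈ Az θ c,
        ((∃ k : ℕ, θ^[k] a = b) ↔ ∃ k : ℕ, θ^[k] (φ a) = φ b) := by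
  haveI : Nonempty A := ⟨c⟩
  have hc' : Cyc θ c := hc
  have hcmem : c ∈ Az θ c := mem_Az.2 (Or.inl rfl)
  constructor
  · rintro ⟨h1, h2⟩
    set ψ := Function.invFunOn φ (Az θ c) with hψdef
    have hinv : Set.InvOn ψ φ (Az θ c) (Az θ c) := hφ.invOn_invFunOn
    have hψmem : ∀ y ∈ Az θ c, ψ y ∈ Az θ c := by
      intro y hy
      obtain ⟨x, hx, hxy⟩ := hφ.surjOn hy
      rw [← hxy, hinv.1 hx]; exact hx
    have h2ψ : ∀ y ∈ Az θ c, θ y ∈ Az θ c → ψ (θ y) = θ (ψ y) := by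
      intro y hy hty
      have hx : ψ y ∈ Az θ c := hψmem y hy
      have hfx : φ (ψ y) = y := hinv.2 hy
      have htx : θ (ψ y) ∈ Az θ c := by
        rw [h1 _ hx, hfx]; exact hty
      have hkey : φ (θ (ψ y)) = θ y := by rw [h2 _ hx htx, hfx]
      rw [← hkey, hinv.1 htx]
    intro a ha b hb
    constructor
    · exact fun hk => mono hc' h2 ha hb hk
    · intro hk
      have h := mono hc' h2ψ (hφ.mapsTo ha) (hφ.mapsTo hb) hk
      rwa [hinv.1 ha, hinv.1 hb] at h
  · intro H
    have hφc : φ c = c := by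
      obtain ⟨a, haz, hac⟩ := hφ.surjOn hcmem
      have hr : ∃ k, θ^[k] c = a := by
        rw [H c hcmem a haz, hac]
        exact reach_c (hφ.mapsTo hcmem)
      obtain ⟨k, hk⟩ := hr
      have hac' : a = c := cyc_eq hc' haz (hk ▸ cyc_iter hc' k)
      exact hac' ▸ hac
    have hφne : ∀ a ∈ Az θ c, a ≠ c → φ a ≠ c := by
      intro a ha hne h
      exact hne (hφ.injOn ha hcmem (h.trans hφc.symm))
    constructor
    · intro a ha
      by_cases hac : a = c
      · subst hac; rw [hφc]
      · constructor
        · intro _; exact theta_mem hc' (hφ.mapsTo ha) (hφne a ha hac)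
        · intro _; exact theta_mem hc' ha hac
    · intro a ha hta
      by_cases hac : a = c
      · subst hac
        have htc : θ a = a := by
          have hcy : Cyc θ (θ a) := by
            have := cyc_iter hc' 1
            simpa using this
          exact cyc_eq hc' hta hcy
        rw [htc, hφc]
        exact htc.symm
      · have ha' : φ a ∈ Az θ c := hφ.mapsTo ha
        have hb' : φ (θ a) ∈ Az θ c := hφ.mapsTo hta
        have hanc : ¬ Cyc θ a := by
          rcases mem_Az.1 ha with h | ⟨h, _⟩
          · exact absurd h hac
          · exact h
        have hba : θ a ≠ a := fun h => hanc ⟨1, le_refl 1, by simpa using h⟩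
        have hfa_ne : φ a ≠ c := hφne a ha hac
        have hta' : θ (φ a) ∈ Az θ c := theta_mem hc' ha' hfa_ne
        -- first: φ (θ a) is reachable from θ (φ a)
        obtain ⟨k, hk⟩ : ∃ k, θ^[k] (φ a) = φ (θ a) :=
          (H a ha (θ a) hta).1 ⟨1, by simp⟩
        have hk1 : k ≠ 0 := by
          intro h0
          apply hba
          have h' : φ a = φ (θ a) := by rw [← hk, h0, Function.iterate_zero_apply]
          exact (hφ.injOn ha hta h').symm
        have hstep : θ^[k-1] (θ (φ a)) = φ (θ a) := by
          have hkk : (k - 1) + 1 = k := by omega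
          rw [← hkk, Function.iterate_succ_apply] at hk
          exact hk
        -- second: θ (φ a) is reachable from φ (θ a)
        obtain ⟨w, hw, hww⟩ := hφ.surjOn hta'
        obtain ⟨m, hm⟩ : ∃ m, θ^[m] a = w := by
          rw [H a ha w hw, hww]
          exact ⟨1, by simp⟩
        have hwa : w ≠ a := by
          intro h
          have hfix : θ (φ a) = φ a := by rw [← hww, h]
          exact hfa_ne (cyc_eq hc' ha' ⟨1, le_refl 1, by simpa using hfix⟩)
        have hm1 : m ≠ 0 := by
          intro h0
          apply hwa
          rw [← hm, h0, Function.iterate_zero_apply]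
        have hmb : θ^[m-1] (θ a) = w := by
          have hmm : (m - 1) + 1 = m := by omega
          rw [← hmm, Function.iterate_succ_apply] at hm
          exact hm
        obtain ⟨j, hj⟩ : ∃ j, θ^[j] (φ (θ a)) = θ (φ a) := by
          rw [← hww]
          exact (H (θ a) hta w hw).1 ⟨m - 1, hmb⟩
        exact antisym hc' hb' hta' hj hstep
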